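/- Let α ∈ (1/2,1), L = ((α+1)/(2α))·log 2, j ≥ 1 and k ≥ 0 an integer. If (x,h) and (x',h') both lie in the open box B_{j,k} = (2^{j-1}k, 2^{j-1}(k+1)) × (jL, (j+1)L), then |x − x'| ≤ e^{(h+h')/2}. In particular, every box B_{j,k} induces a clique in the hyperbolic random graph adjacency relation. -/
import Mathlib


theorem stmt1 (α L : ℝ) (hα : α ∈ Set.Ioo (1/2 : ℝ) 1)
    (hL : L = ((α + 1) / (2 * α)) * Real.log 2)
    (j k : ℕ) (hj : 1 ≤ j) (x h x' h' : ℝ)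
    (hx : x ∈ Set.Ioo ((2:ℝ)^(j-1) * k) ((2:ℝ)^(j-1) * (k+1)))
    (hh : h ∈ Set.Ioo ((j:ℝ) * L) (((j:ℝ)+1) * L))
    (hx' : x' ∈ Set.Ioo ((2:ℝ)^(j-1) * k) ((2:ℝ)^(j-1) * (k+1)))
    (hh' : h' ∈ Set.Ioo ((j:ℝ) * L) (((j:ℝ)+1) * L)) :
    |x - x'| ≤ Real.exp ((h + h') / 2) := by
  obtain ⟨hx1, hx2⟩ := hx
  obtain ⟨hx'1, hx'2⟩ := hx'
  obtain ⟨hh1, _⟩ := hh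
  obtain ⟨hh'1, _⟩ := hh'
  obtain ⟨hα1, hα2⟩ := hα
  have hlog2 : (0:ℝ) < Real.log 2 := Real.log_pos (by norm_num)
  have hαpos : (0:ℝ) < α := lt_trans (by norm_num) hα1
  have hc : (1:ℝ) < (α + 1) / (2 * α) := by
    rw [lt_div_iff₀ (by linarith)]; linarith
  have hLlog : Real.log 2 ≤ L := by
    rw [hL]; nlinarith
  have habs : |x - x'| < (2:ℝ)^(j-1) := by
    rw [abs_sub_lt_iff]
    constructor <;> nlinarith
  have hjL : (j:ℝ) * Real.log 2 ≤ (j:ℝ) * L :=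
    mul_le_mul_of_nonneg_left hLlog (Nat.cast_nonneg j)
  have hexp : (2:ℝ)^j = Real.exp ((j:ℝ) * Real.log 2) := by
    rw [Real.exp_nat_mul, Real.exp_log (by norm_num)]
  have h2j : (2:ℝ)^(j-1) ≤ (2:ℝ)^j :=
    pow_le_pow_right₀ (by norm_num) (Nat.sub_le j 1)
  have hmid : (j:ℝ) * L ≤ (h + h') / 2 := by linarith
  calc |x - x'| ≤ (2:ℝ)^j := le_trans habs.le h2j
    _ = Real.exp ((j:ℝ) * Real.log 2) := hexp
    _ ≤ Real.exp ((h + h') / 2) := Real.exp_le_exp.2 (le_trans hjL hmid)
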